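/- Let N = N_1 ⊔ … ⊔ N_d be a partitioned vertex set with |N_i| = n_i ≥ r_i, let V = ℝ^N with standard basis (e_v)_{v∈N}, and let span K^q_n ⊆ ⋀^q V be the span of {e_T : T an edge of K^q_n}. Let Y be a real vector space and Γ : span K^q_n → Y a linear map such that for every subset R ⊆ N with |R ∩ N_i| = r_i for all i ∈ [d] there exists m ∈ ker Γ with supp(m) = E(K^q_n[R]). Then mwsat(K^q_n, K^q_r) ≥ rank Γ. -/
import Mathlib


open Finset

/-- The set of vertices in class `i` of the partition given by `part`. -/
def classOf {α : Type*} [Fintype α] [DecidableEq α] {d : ℕ} (part : α → Fin d) (i : Fin d) :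
    Finset α :=
  Finset.univ.filter fun v => part v = i

/-- The complete `d`-partite `q`-graph `K^q_n` on the vertex set partitioned by `part`. -/
def mEdges {α : Type*} [Fintype α] [DecidableEq α] {d : ℕ} (part : α → Fin d) (q : ℕ) :
    Finset (Finset α) :=
  (Finset.univ.powersetCard q).filter fun e => ∀ i : Fin d, (e.filter fun v => part v = i).card ≤ 1

/-- The induced subgraph `K^q_n[R]` on `R`. -/
def indEdges {α : Type*} [Fintype α] [DecidableEq α] {d : ℕ} (part : α → Fin d) (q : ℕ)
    (R : Finset α) : Finset (Finset α) :=
  (mEdges part q).filter fun e => e ⊆ R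

/-- `G` contains a directed copy of `K^q_r` containing the edge `e`. -/
def DirCopyAt {α : Type*} [Fintype α] [DecidableEq α] {d : ℕ} (part : α → Fin d) (q : ℕ)
    (r : Fin d → ℕ) (G : Finset (Finset α)) (e : Finset α) : Prop :=
  ∃ R : Finset α, (∀ i : Fin d, (R.filter fun v => part v = i).card = r i) ∧
    e ∈ indEdges part q R ∧ indEdges part q R ⊆ G

/-- `G` is directed weakly `K^q_r`-saturated in `K^q_n`. -/
def DirWeaklySat {α : Type*} [Fintype α] [DecidableEq α] {d : ℕ} (part : α → Fin d) (q : ℕ)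
    (r : Fin d → ℕ) (G : Finset (Finset α)) : Prop :=
  G ⊆ mEdges part q ∧ ∃ L : List (Finset α), L.Nodup ∧ L.toFinset = mEdges part q \ G ∧
    ∀ i : Fin L.length, DirCopyAt part q r (G ∪ (L.take (i.1 + 1)).toFinset) (L.get i)

/-- The directed weak saturation number `mwsat(K^q_n, K^q_r)`. -/
noncomputable def mwsat {α : Type*} [Fintype α] [DecidableEq α] {d : ℕ} (part : α → Fin d)
    (q : ℕ) (r : Fin d → ℕ) : ℕ :=
  sInf {m | ∃ G, DirWeaklySat part q r G ∧ G.card = m}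

/-- The basis element `e_T` of `⋀V` (for `V = ℝ^N`), modelled as the function
`Finset α → ℝ` which is `1` at `T` and `0` elsewhere. -/
noncomputable def eB {α : Type*} [DecidableEq α] (T : Finset α) : Finset α → ℝ :=
  fun S => if S = T then 1 else 0

/-- The subspace `span K^q_n ⊆ ⋀^q V` spanned by the `e_T` for edges `T` of `K^q_n`. -/
noncomputable def spanK {α : Type*} [Fintype α] [DecidableEq α] {d : ℕ} (part : α → Fin d)
    (q : ℕ) : Submodule ℝ (Finset α → ℝ) :=
  Submodule.span ℝ {x : Finset α → ℝ | ∃ T ∈ mEdges part q, x = eB T}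

/-- Lemma 4.1: if `Γ : span K^q_n → Y` is a linear map such that for every `R ⊆ N` with
`|R ∩ N_i| = r_i` for all `i` there is an `m ∈ ker Γ` with `supp(m) = E(K^q_n[R])`,
then `mwsat(K^q_n, K^q_r) ≥ rank Γ`. -/
theorem mwsat_ge_rank {α : Type*} [Fintype α] [DecidableEq α] {d q : ℕ} (part : α → Fin d)
    (r : Fin d → ℕ) (hrn : ∀ i, r i ≤ (classOf part i).card)
    (Y : Type*) [AddCommGroup Y] [Module ℝ Y]
    (Γ : ↥(spanK part q) →ₗ[ℝ] Y)
    (hΓ : ∀ R : Finset α, (∀ i : Fin d, (R.filter fun v => part v = i).card = r i) →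
      ∃ (m : Finset α → ℝ) (hm : m ∈ spanK part q),
        Γ ⟨m, hm⟩ = 0 ∧ ∀ S : Finset α, m S ≠ 0 ↔ S ∈ indEdges part q R) :
    Module.finrank ℝ ↥(LinearMap.range Γ) ≤ mwsat part q r := by
  classical
  have hsubE : ∀ (S R : Finset α), S ∈ indEdges part q R → S ∈ mEdges part q :=
    fun S R hS => (Finset.mem_filter.mp hS).1
  have heBmem : ∀ {T : Finset α}, T ∈ mEdges part q → eB T ∈ spanK part q :=
    fun {T} hT => Submodule.subset_span ⟨T, hT, rfl⟩
  have hne : {m | ∃ G, DirWeaklySat part q r G ∧ G.card = m}.Nonempty := by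
    refine ⟨(mEdges part q).card, mEdges part q,
      ⟨subset_rfl, [], List.nodup_nil, by simp, fun i => absurd i.2 (by simp)⟩, rfl⟩
  refine le_csInf hne ?_
  rintro c ⟨G, ⟨hGsub, L, hnd, hLfin, hsat⟩, rfl⟩
  let g : Finset α → ↥(spanK part q) := fun T =>
    if h : T ∈ mEdges part q then ⟨eB T, heBmem h⟩ else 0
  let f : Finset α → Y := fun T => Γ (g T)
  set W : Submodule ℝ Y := Submodule.span ℝ (↑(G.image f)) with hWdef
  -- the kernel elements give linear relations among the f S
  have hrel : ∀ R : Finset α,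
      (∀ i : Fin d, (R.filter fun v => part v = i).card = r i) →
      ∃ m : Finset α → ℝ, (∀ S : Finset α, m S ≠ 0 ↔ S ∈ indEdges part q R) ∧
        ∑ S ∈ indEdges part q R, m S • f S = 0 := by
    intro R hR
    obtain ⟨m, hm, hΓ0, hsupp⟩ := hΓ R hR
    refine ⟨m, hsupp, ?_⟩
    have hg : (∑ S ∈ indEdges part q R, m S • g S) = ⟨m, hm⟩ := by
      apply Subtype.ext
      have hcoe : ((∑ S ∈ indEdges part q R, m S • g S : ↥(spanK part q)) : Finset α → ℝ)
          = ∑ S ∈ indEdges part q R, m S • ((g S : ↥(spanK part q)) : Finset α → ℝ) := by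
        push_cast
        rfl
      rw [hcoe]
      funext S'
      have hval : ∀ S ∈ indEdges part q R,
          m S • ((g S : ↥(spanK part q)) : Finset α → ℝ) S' = m S * (if S' = S then 1 else 0) := by
        intro S hS
        have hSE : S ∈ mEdges part q := hsubE S R hS
        simp [g, hSE, eB]
      rw [Finset.sum_apply]
      have hval' : ∀ S ∈ indEdges part q R,
          (m S • ((g S : ↥(spanK part q)) : Finset α → ℝ)) S' = m S * (if S' = S then 1 else 0) := by
        intro S hS
        have hSE : S ∈ mEdges part q := hsubE S R hS
        simp [g, hSE, eB]
      rw [Finset.sum_congr rfl hval']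
      show _ = m S'
      by_cases hS' : S' ∈ indEdges part q R
      · rw [Finset.sum_eq_single S']
        · simp [hS']
        · intro b _ hb
          simp [Ne.symm hb]
        · intro h; exact absurd hS' h
      · have hz : m S' = 0 := by
          by_contra h
          exact hS' ((hsupp S').mp h)
        rw [hz]
        apply Finset.sum_eq_zero
        intro S hS
        have : S' ≠ S := fun h => hS' (h ▸ hS)
        simp [this]
    calc ∑ S ∈ indEdges part q R, m S • f S
        = Γ (∑ S ∈ indEdges part q R, m S • g S) := by
          rw [map_sum]
          exact Finset.sum_congr rfl fun S _ => (map_smul Γ _ _).symm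
      _ = 0 := by rw [hg, hΓ0]
  -- Step 1: every f T for T in G ∪ first j missing edges lies in W
  have key : ∀ j : ℕ, j ≤ L.length → ∀ T ∈ G ∪ (L.take j).toFinset, f T ∈ W := by
    intro j
    induction j with
    | zero =>
      intro _ T hT
      simp only [List.take_zero, List.toFinset_nil, Finset.union_empty] at hT
      exact Submodule.subset_span (Finset.mem_image_of_mem f hT)
    | succ j ih =>
      intro hj T hT
      have hjlt : j < L.length := hj
      set e : Finset α := L.get ⟨j, hjlt⟩ with hedef
      have htake : (L.take (j+1)).toFinset = (L.take j).toFinset ∪ {e} := by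
        rw [List.take_succ, List.toFinset_append]
        congr 1
        simp [List.getElem?_eq_getElem hjlt, hedef]
      have hmem_prev : ∀ S ∈ G ∪ (L.take (j+1)).toFinset, S ≠ e → f S ∈ W := by
        intro S hS hSe
        apply ih hjlt.le
        rw [htake] at hS
        rcases Finset.mem_union.mp hS with h | h
        · exact Finset.mem_union_left _ h
        · rcases Finset.mem_union.mp h with h | h
          · exact Finset.mem_union_right _ h
          · exact absurd (Finset.mem_singleton.mp h) hSe
      rw [htake, ← Finset.union_assoc] at hT
      rcases Finset.mem_union.mp hT with hT | hT
      · exact ih hjlt.le T hT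
      · -- T = e : use the saturating copy
        rw [Finset.mem_singleton] at hT
        subst hT
        obtain ⟨R, hR, heR, hRsub⟩ := hsat ⟨j, hjlt⟩
        obtain ⟨m, hsupp, hsum⟩ := hrel R hR
        have hme : m e ≠ 0 := (hsupp e).mpr heR
        have heR' : e ∈ indEdges part q R := heR
        have hsplit : m e • f e + ∑ S ∈ (indEdges part q R).erase e, m S • f S = 0 := by
          rw [Finset.add_sum_erase _ (fun S => m S • f S) heR']
          exact hsum
        have hfe : f e = (m e)⁻¹ • (-(∑ S ∈ (indEdges part q R).erase e, m S • f S)) := by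
          have : m e • f e = -(∑ S ∈ (indEdges part q R).erase e, m S • f S) := by
            linear_combination (norm := module) hsplit
          rw [← this, smul_smul, inv_mul_cancel₀ hme, one_smul]
        rw [hfe]
        apply Submodule.smul_mem
        apply Submodule.neg_mem
        apply Submodule.sum_mem
        intro S hS
        apply Submodule.smul_mem
        have hS' : S ∈ indEdges part q R := Finset.mem_of_mem_erase hS
        exact hmem_prev S (hRsub hS') (Finset.ne_of_mem_erase hS)
  have hfW : ∀ T ∈ mEdges part q, f T ∈ W := by
    intro T hT
    apply key L.length le_rfl
    rw [List.take_length]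
    by_cases hTG : T ∈ G
    · exact Finset.mem_union_left _ hTG
    · refine Finset.mem_union_right _ ?_
      rw [hLfin]
      exact Finset.mem_sdiff.mpr ⟨hT, hTG⟩
  -- range Γ ≤ W
  have hrange : LinearMap.range Γ ≤ W := by
    rintro y ⟨x, rfl⟩
    obtain ⟨xv, hxv⟩ := x
    show Γ ⟨xv, hxv⟩ ∈ W
    induction hxv using Submodule.span_induction with
    | mem x hx =>
      obtain ⟨T, hT, rfl⟩ := hx
      have : (⟨eB T, Submodule.subset_span ⟨T, hT, rfl⟩⟩ : ↥(spanK part q)) = g T := by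
        simp [g, hT]
      rw [this]
      exact hfW T hT
    | zero =>
      have : (⟨0, Submodule.zero_mem _⟩ : ↥(spanK part q)) = 0 := rfl
      rw [this, map_zero]
      exact Submodule.zero_mem W
    | add x y hx hy ihx ihy =>
      have : (⟨x + y, Submodule.add_mem _ hx hy⟩ : ↥(spanK part q)) = ⟨x, hx⟩ + ⟨y, hy⟩ := rfl
      rw [this, map_add]
      exact Submodule.add_mem W ihx ihy
    | smul a x hx ihx =>
      have : (⟨a • x, Submodule.smul_mem _ a hx⟩ : ↥(spanK part q)) = a • ⟨x, hx⟩ := rfl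
      rw [this, map_smul]
      exact Submodule.smul_mem W a ihx
  haveI : FiniteDimensional ℝ ↥W :=
    FiniteDimensional.span_of_finite ℝ (G.image f).finite_toSet
  calc Module.finrank ℝ ↥(LinearMap.range Γ) ≤ Module.finrank ℝ ↥W :=
        Submodule.finrank_mono hrange
    _ ≤ (G.image f).card := finrank_span_finset_le_card _
    _ ≤ G.card := Finset.card_image_le
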